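/- For all integers s ≥ 1 and m ≥ 2 with t = 2m − 1, the graph H(t,s) has diameter 2: any two distinct vertices of H(t,s) are at distance at most 2, and there exist two vertices at distance exactly 2. -/

import Mathlib

/-- The vertex set of the graph `H(t,s)` (with `m`-subsets of the `t`-clique used as
attachment sets): the `t` vertices of the complete graph `T` together with, for each
`m`-subset `X` of `V(T)`, the `s` vertices of `K_X` not identified with `X`. -/
def HVert (t m s : ℕ) : Type :=
  Fin t ⊕ ({X : Finset (Fin t) // X.card = m} × Fin s)

/-- The graph `H(t,s)`: a complete graph `T` on `t` vertices, and for each `m`-subset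
`X` of `V(T)` a complete graph `K_X` on `s + m` vertices, with `m` of the vertices of
`K_X` identified with `X`. -/
def HGraph (t m s : ℕ) : SimpleGraph (HVert t m s) :=
  SimpleGraph.fromRel (fun a b =>
    match a, b with
    | Sum.inl _, Sum.inl _ => True
    | Sum.inl x, Sum.inr q => x ∈ q.1.1
    | Sum.inr _, Sum.inl _ => False
    | Sum.inr q, Sum.inr r => q.1 = r.1)

lemma hadj_inl_inl {t m s : ℕ} (x y : Fin t) (h : x ≠ y) :
    (HGraph t m s).Adj (.inl x) (.inl y) := by
  rw [HGraph]
  exact (SimpleGraph.fromRel_adj (V := HVert t m s) _ _ _).mpr ⟨fun hc => h (Sum.inl.inj hc), Or.inl trivial⟩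

lemma hadj_inl_inr {t m s : ℕ} (x : Fin t) (q : {X : Finset (Fin t) // X.card = m} × Fin s)
    (h : x ∈ q.1.1) : (HGraph t m s).Adj (.inl x) (.inr q) := by
  rw [HGraph]
  exact (SimpleGraph.fromRel_adj (V := HVert t m s) _ _ _).mpr ⟨fun hc => by simp at hc, Or.inl h⟩

lemma hadj_inr_inr {t m s : ℕ} (q r : {X : Finset (Fin t) // X.card = m} × Fin s)
    (hne : q ≠ r) (h : q.1 = r.1) : (HGraph t m s).Adj (.inr q) (.inr r) := by
  rw [HGraph]
  exact (SimpleGraph.fromRel_adj (V := HVert t m s) _ _ _).mpr ⟨fun hc => hne (Sum.inr.inj hc), Or.inl h⟩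

lemma hnadj_inl_inr {t m s : ℕ} (x : Fin t) (q : {X : Finset (Fin t) // X.card = m} × Fin s)
    (h : x ∉ q.1.1) : ¬ (HGraph t m s).Adj (.inl x) (.inr q) := by
  rw [HGraph]
  intro hadj
  rcases (SimpleGraph.fromRel_adj (V := HVert t m s) _ _ _).mp hadj with ⟨_, h1 | h1⟩
  · exact h h1
  · exact h1

/-- for `s ≥ 1`, `m ≥ 2` and `t = 2m - 1`, the graph `H(t,s)` has
diameter 2. -/
theorem HGraph_diam_two (m s : ℕ) (hm : 2 ≤ m) (hs : 1 ≤ s) :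
    (∀ a b : HVert (2 * m - 1) m s, (HGraph (2 * m - 1) m s).dist a b ≤ 2) ∧
      ∃ a b : HVert (2 * m - 1) m s, (HGraph (2 * m - 1) m s).dist a b = 2 := by
  set t := 2 * m - 1 with ht
  have htm : m < t := by omega
  have hcard : Fintype.card (Fin t) = t := Fintype.card_fin t
  have hle : ∀ a b : HVert t m s, (HGraph t m s).dist a b ≤ 2 := by
    intro a b
    by_cases hab : a = b
    · simp [hab, SimpleGraph.dist_self]
    match a, b with
    | Sum.inl x, Sum.inl y =>
      have h1 := hadj_inl_inl (m := m) (s := s) x y (fun h => hab (by rw [h]))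
      calc (HGraph t m s).dist _ _ ≤ (h1.toWalk).length := SimpleGraph.dist_le _
        _ ≤ 2 := Nat.le_of_ble_eq_true rfl
    | Sum.inl x, Sum.inr q =>
      by_cases hx : x ∈ q.1.1
      · have h1 := hadj_inl_inr x q hx
        calc (HGraph t m s).dist _ _ ≤ (h1.toWalk).length := SimpleGraph.dist_le _
          _ ≤ 2 := Nat.le_of_ble_eq_true rfl
      · obtain ⟨y, hy⟩ : q.1.1.Nonempty := by
          rw [← Finset.card_pos, q.1.2]; omega
        have hxy : x ≠ y := fun h => hx (h ▸ hy)
        have h1 := hadj_inl_inl (m := m) (s := s) x y hxy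
        have h2 := hadj_inl_inr y q hy
        calc (HGraph t m s).dist _ _
            ≤ (SimpleGraph.Walk.cons h1 h2.toWalk).length := SimpleGraph.dist_le _
          _ ≤ 2 := Nat.le_of_ble_eq_true rfl
    | Sum.inr q, Sum.inl y =>
      by_cases hy : y ∈ q.1.1
      · have h1 := (hadj_inl_inr y q hy).symm
        calc (HGraph t m s).dist _ _ ≤ (h1.toWalk).length := SimpleGraph.dist_le _
          _ ≤ 2 := Nat.le_of_ble_eq_true rfl
      · obtain ⟨x, hx⟩ : q.1.1.Nonempty := by
          rw [← Finset.card_pos, q.1.2]; omega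
        have hxy : x ≠ y := fun h => hy (h ▸ hx)
        have h1 := (hadj_inl_inr x q hx).symm
        have h2 := hadj_inl_inl (m := m) (s := s) x y hxy
        calc (HGraph t m s).dist _ _
            ≤ (SimpleGraph.Walk.cons h1 h2.toWalk).length := SimpleGraph.dist_le _
          _ ≤ 2 := Nat.le_of_ble_eq_true rfl
    | Sum.inr q, Sum.inr r =>
      have hqr : q ≠ r := fun h => hab (by rw [h])
      by_cases h1 : q.1 = r.1
      · have h := hadj_inr_inr q r hqr h1
        calc (HGraph t m s).dist _ _ ≤ (h.toWalk).length := SimpleGraph.dist_le _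
          _ ≤ 2 := Nat.le_of_ble_eq_true rfl
      · obtain ⟨x, hx⟩ : (q.1.1 ∩ r.1.1).Nonempty := by
          rw [← Finset.card_pos]
          by_contra hpos
          have h0 : (q.1.1 ∩ r.1.1).card = 0 := by omega
          have hd : Disjoint q.1.1 r.1.1 := by
            rw [Finset.disjoint_iff_inter_eq_empty, ← Finset.card_eq_zero]; exact h0
          have := Finset.card_le_univ (q.1.1 ∪ r.1.1)
          rw [Finset.card_union_of_disjoint hd, q.1.2, r.1.2, hcard] at this
          omega
        rw [Finset.mem_inter] at hx
        have h1 := (hadj_inl_inr x q hx.1).symm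
        have h2 := hadj_inl_inr x r hx.2
        calc (HGraph t m s).dist _ _
            ≤ (SimpleGraph.Walk.cons h1 h2.toWalk).length := SimpleGraph.dist_le _
          _ ≤ 2 := Nat.le_of_ble_eq_true rfl
  refine ⟨hle, ?_⟩
  obtain ⟨X, _, hX⟩ := Finset.exists_subset_card_eq (s := (Finset.univ : Finset (Fin t))) (n := m)
    (by rw [Finset.card_univ, hcard]; omega)
  obtain ⟨x, hx⟩ : Xᶜ.Nonempty := by
    rw [← Finset.card_pos, Finset.card_compl, hX, hcard]; omega
  rw [Finset.mem_compl] at hx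
  set q : {X : Finset (Fin t) // X.card = m} × Fin s := (⟨X, hX⟩, ⟨0, hs⟩)
  refine ⟨Sum.inl x, Sum.inr q, ?_⟩
  have hnadj := hnadj_inl_inr (s := s) x q hx
  have hle2 := hle (Sum.inl x) (Sum.inr q)
  have hne : (Sum.inl x : HVert t m s) ≠ Sum.inr q := by simp
  have hreach : (HGraph t m s).Reachable (Sum.inl x) (Sum.inr q) := by
    obtain ⟨y, hy⟩ : X.Nonempty := by rw [← Finset.card_pos, hX]; omega
    exact ((hadj_inl_inl (m := m) (s := s) x y (fun h => hx (h ▸ hy))).toWalk.append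
      (hadj_inl_inr y q hy).toWalk).reachable
  have h0 : (HGraph t m s).dist (Sum.inl x) (Sum.inr q) ≠ 0 := by
    have := hreach.pos_dist_of_ne hne
    omega
  have h1 : (HGraph t m s).dist (Sum.inl x) (Sum.inr q) ≠ 1 := by
    intro h
    exact hnadj ((SimpleGraph.dist_eq_one_iff_adj).mp h)
  omega
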